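/- arXiv:1911.06006 — 7 statements merged into one kernel-verified Lean document; each statement's English description precedes it below -/
import Mathlib

section
/- Let $y_1, y_2 > 0$ with $y_2 > 1$, and set $h = \sqrt{y_1 + y_2 - y_1 y_2}$ (assume $y_1 + y_2 > y_1 y_2$ so $h$ is real and positive), and $x_l = \frac{y_2 (h - y_1)^2}{(y_1+y_2)^2}$, $x_r = \frac{y_2 (h + y_1)^2}{(y_1+y_2)^2}$, $\alpha = y_1/y_2$. Then $\int_{x_l}^{x_r} x \cdot \frac{(\alpha+1)\sqrt{(x_r - x)(x - x_l)}}{2\pi y_1 x (1-x)} \, dx = \frac{h^2}{y_2(y_1+y_2)}$. -/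
open Real

open Set in
lemma key_integral (a b c : ℝ) (hab : a < b) (hbc : b < c) :
    ∫ x in a..b, Real.sqrt ((b - x) * (x - a)) / (c - x)
      = π * ((c - (a + b) / 2) - Real.sqrt ((c - a) * (c - b))) := by
  obtain ⟨m, hm⟩ : ∃ m : ℝ, m = (a + b) / 2 := ⟨_, rfl⟩
  obtain ⟨r, hr⟩ : ∃ r : ℝ, r = (b - a) / 2 := ⟨_, rfl⟩
  obtain ⟨d, hd⟩ : ∃ d : ℝ, d = c - m := ⟨_, rfl⟩
  obtain ⟨D, hD⟩ : ∃ D : ℝ, D = Real.sqrt ((c - a) * (c - b)) := ⟨_, rfl⟩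
  have hr0 : 0 < r := by rw [hr]; linarith
  have hdr : r < d := by rw [hd, hm, hr]; linarith
  have hd0 : 0 < d := lt_trans hr0 hdr
  have hca : c - a = d + r := by rw [hd, hm, hr]; ring
  have hcb : c - b = d - r := by rw [hd, hm, hr]; ring
  have hD2 : D ^ 2 = d ^ 2 - r ^ 2 := by
    rw [hD, sq_sqrt (by nlinarith)]; rw [hca, hcb]; ring
  have hDpos : 0 < D := by rw [hD]; exact Real.sqrt_pos.mpr (by nlinarith)
  set F : ℝ → ℝ := fun x => -Real.sqrt ((b - x) * (x - a))
      + d * Real.arcsin ((x - m) / r)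
      - D * Real.arcsin ((d * (x - m) - r ^ 2) / (r * (c - x))) with hF
  have hderiv : ∀ x ∈ Ioo a b,
      HasDerivAt F (Real.sqrt ((b - x) * (x - a)) / (c - x)) x := by
    intro x hx
    obtain ⟨hax, hxb⟩ := hx
    have hQ : (0:ℝ) < (b - x) * (x - a) := by nlinarith
    obtain ⟨s, hs⟩ : ∃ s : ℝ, s = Real.sqrt ((b - x) * (x - a)) := ⟨_, rfl⟩
    have hs0 : 0 < s := by rw [hs]; exact Real.sqrt_pos.mpr hQ
    have hs2 : s ^ 2 = (b - x) * (x - a) := by rw [hs]; exact sq_sqrt hQ.le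
    have hcx : 0 < c - x := by linarith
    have id1 : r ^ 2 - (x - m) ^ 2 = s ^ 2 := by rw [hs2, hr, hm]; ring
    have id2 : (r * (c - x)) ^ 2 - (d * (x - m) - r ^ 2) ^ 2 = D ^ 2 * s ^ 2 := by
      rw [hD2, hs2, hd, hm, hr]; ring
    -- piece 1
    have hP : HasDerivAt (fun y : ℝ => (b - y) * (y - a)) (a + b - 2 * x) x := by
      have := (((hasDerivAt_id x).const_sub b).mul ((hasDerivAt_id x).sub_const a))
      refine this.congr_deriv (Eq.symm ?_)
      simp only [id_eq]; ring
    have h1 : HasDerivAt (fun y => -Real.sqrt ((b - y) * (y - a))) ((x - m) / s) x := by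
      have := (hP.sqrt (ne_of_gt hQ)).neg
      refine this.congr_deriv (Eq.symm ?_)
      rw [← hs, hm]
      field_simp
      ring
    -- piece 2
    have hu2 : ((x - m) / r) ^ 2 < 1 := by
      rw [div_pow, div_lt_one (by positivity)]
      nlinarith [sq_nonneg s]
    have huabs : |(x - m) / r| < 1 := by
      rw [← Real.sqrt_one, ← Real.sqrt_sq_eq_abs]
      exact Real.sqrt_lt_sqrt (sq_nonneg _) (by linarith)
    have hu1 : (x - m) / r ≠ 1 := by intro h; rw [h] at huabs; simp at huabs
    have hu1' : (x - m) / r ≠ -1 := by intro h; rw [h] at huabs; simp at huabs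
    have hinner2 : HasDerivAt (fun y : ℝ => (y - m) / r) (1 / r) x := by
      simpa using ((hasDerivAt_id x).sub_const m).div_const r
    have hsq1 : Real.sqrt (1 - ((x - m) / r) ^ 2) = s / r := by
      have e : 1 - ((x - m) / r) ^ 2 = (s / r) ^ 2 := by
        field_simp
        linarith [id1]
      rw [e, Real.sqrt_sq (by positivity)]
    have h2 : HasDerivAt (fun y => Real.arcsin ((y - m) / r)) (1 / s) x := by
      have := (Real.hasDerivAt_arcsin hu1' hu1).comp x hinner2
      refine this.congr_deriv (Eq.symm ?_)
      rw [hsq1]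
      field_simp
    -- piece 3
    have hrcx : (0:ℝ) < r * (c - x) := by positivity
    obtain ⟨w, hw⟩ : ∃ w : ℝ, w = (d * (x - m) - r ^ 2) / (r * (c - x)) := ⟨_, rfl⟩
    have h1w : 1 - w ^ 2 = (D * s / (r * (c - x))) ^ 2 := by
      rw [hw]
      field_simp
      linarith [id2]
    have hw2 : w ^ 2 < 1 := by
      have : (0:ℝ) < (D * s / (r * (c - x))) ^ 2 := by positivity
      linarith
    have hwabs : |w| < 1 := by
      rw [← Real.sqrt_one, ← Real.sqrt_sq_eq_abs]
      exact Real.sqrt_lt_sqrt (sq_nonneg _) (by linarith)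
    have hw1 : w ≠ 1 := by intro h; rw [h] at hwabs; simp at hwabs
    have hw1' : w ≠ -1 := by intro h; rw [h] at hwabs; simp at hwabs
    have hinner3 : HasDerivAt (fun y : ℝ => (d * (y - m) - r ^ 2) / (r * (c - y)))
        ((d * (r * (c - x)) - (d * (x - m) - r ^ 2) * (-r)) / (r * (c - x)) ^ 2) x := by
      have hnum : HasDerivAt (fun y : ℝ => d * (y - m) - r ^ 2) d x := by
        simpa using (((hasDerivAt_id x).sub_const m).const_mul d).sub_const (r ^ 2)
      have hden : HasDerivAt (fun y : ℝ => r * (c - y)) (-r) x := by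
        have := ((hasDerivAt_id x).const_sub c).const_mul r
        refine this.congr_deriv (Eq.symm ?_)
        simp
      exact hnum.div hden (ne_of_gt hrcx)
    have hsqw : Real.sqrt (1 - w ^ 2) = D * s / (r * (c - x)) := by
      rw [h1w, Real.sqrt_sq (by positivity)]
    have h3 : HasDerivAt (fun y => Real.arcsin ((d * (y - m) - r ^ 2) / (r * (c - y))))
        (D / ((c - x) * s)) x := by
      have harc := Real.hasDerivAt_arcsin hw1' hw1
      rw [hw] at harc
      have := harc.comp x hinner3
      refine this.congr_deriv (Eq.symm ?_)
      rw [← hw, hsqw]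
      rw [eq_comm]
      have hnum2 : d * (r * (c - x)) - (d * (x - m) - r ^ 2) * (-r) = r * (d ^ 2 - r ^ 2) := by
        rw [hd, hm, hr]; ring
      rw [hnum2, ← hD2]
      field_simp
    -- assemble
    have hsum : HasDerivAt F ((x - m) / s + d * (1 / s) - D * (D / ((c - x) * s))) x :=
      (h1.add (h2.const_mul d)).sub (h3.const_mul D)
    have heq : (x - m) / s + d * (1 / s) - D * (D / ((c - x) * s))
        = Real.sqrt ((b - x) * (x - a)) / (c - x) := by
      rw [← hs]
      have hkey : (x - m + d) * (c - x) - D ^ 2 = s ^ 2 := by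
        rw [hD2, hs2, hd, hm, hr]; ring
      have e : (x - m) / s + d * (1 / s) - D * (D / ((c - x) * s))
          = ((x - m + d) * (c - x) - D ^ 2) / ((c - x) * s) := by
        field_simp
      rw [e, hkey, sq, mul_comm (c - x) s, mul_div_mul_left _ _ (ne_of_gt hs0)]
    rw [← heq]
    exact hsum
  -- continuity of F on Icc
  have hsqc : Continuous (fun x : ℝ => Real.sqrt ((b - x) * (x - a))) :=
    Real.continuous_sqrt.comp ((continuous_const.sub continuous_id).mul
      (continuous_id.sub continuous_const))
  have hFcont : ContinuousOn F (Icc a b) := by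
    rw [hF]
    apply ContinuousOn.sub
    · apply ContinuousOn.add hsqc.continuousOn.neg
      exact (continuous_const.mul (Real.continuous_arcsin.comp
        ((continuous_id.sub continuous_const).div_const r))).continuousOn
    · apply ContinuousOn.mul continuousOn_const
      apply Real.continuous_arcsin.comp_continuousOn
      apply ContinuousOn.div
      · exact ((continuous_const.mul (continuous_id.sub continuous_const)).sub
          continuous_const).continuousOn
      · exact (continuous_const.mul (continuous_const.sub continuous_id)).continuousOn
      · intro x hx
        have hxb : x ≤ b := hx.2
        have hcx : 0 < c - x := by linarith
        positivity
  -- integrability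
  have hint : IntervalIntegrable (fun x => Real.sqrt ((b - x) * (x - a)) / (c - x))
      MeasureTheory.volume a b := by
    apply ContinuousOn.intervalIntegrable
    apply ContinuousOn.div hsqc.continuousOn
      (continuous_const.sub continuous_id).continuousOn
    intro x hx
    simp only [Pi.sub_apply, id_eq]
    rw [uIcc_of_le hab.le] at hx
    have hxb : x ≤ b := hx.2
    intro h
    have := sub_eq_zero.mp h
    linarith
  have := intervalIntegral.integral_eq_sub_of_hasDeriv_right_of_le hab.le hFcont
    (fun x hx => (hderiv x hx).hasDerivWithinAt) hint
  rw [this]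
  -- evaluate F at endpoints
  have hFb : F b = d * (π / 2) - D * (π / 2) := by
    rw [hF]
    simp only
    have e1 : (b - b) * (b - a) = 0 := by ring
    have e2 : (b - m) / r = 1 := by
      rw [div_eq_iff (ne_of_gt hr0), hm, hr]; ring
    have e3 : (d * (b - m) - r ^ 2) / (r * (c - b)) = 1 := by
      rw [hcb]
      have : b - m = r := by rw [hm, hr]; ring
      rw [this]
      have : d * r - r ^ 2 = r * (d - r) := by ring
      rw [this, div_self (ne_of_gt (mul_pos hr0 (by linarith : (0:ℝ) < d - r)))]
    rw [e1, e2, e3, Real.sqrt_zero, Real.arcsin_one]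
    ring
  have hFa : F a = d * (-(π / 2)) - D * (-(π / 2)) := by
    rw [hF]
    simp only
    have e1 : (b - a) * (a - a) = 0 := by ring
    have e2 : (a - m) / r = -1 := by
      rw [div_eq_iff (ne_of_gt hr0), hm, hr]; ring
    have e3 : (d * (a - m) - r ^ 2) / (r * (c - a)) = -1 := by
      rw [hca]
      have : a - m = -r := by rw [hm, hr]; ring
      rw [this]
      have h4 : d * -r - r ^ 2 = -(r * (d + r)) := by ring
      rw [h4, neg_div, div_self (by positivity : r * (d + r) ≠ 0)]
    rw [e1, e2, e3, Real.sqrt_zero, Real.arcsin_neg, Real.arcsin_one]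
    ring
  rw [hFb, hFa, ← hD, hd, hm]
  ring

open Set in
lemma cancel_aux (A B C x : ℝ) (hx : x ≠ 0) :
    x * (A / (B * x * C)) = A / B * (1 / C) := by
  by_cases hB : B = 0
  · simp [hB]
  by_cases hC : C = 0
  · simp [hC]
  field_simp

theorem stmt_0 (y1 y2 : ℝ) (hy1 : 0 < y1) (hy2 : 0 < y2) (hy2' : 1 < y2)
    (hpos : y1 * y2 < y1 + y2) :
    let h := Real.sqrt (y1 + y2 - y1 * y2)
    let xl := y2 * (h - y1) ^ 2 / (y1 + y2) ^ 2
    let xr := y2 * (h + y1) ^ 2 / (y1 + y2) ^ 2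
    let α := y1 / y2
    (∫ x in xl..xr, x * ((α + 1) * Real.sqrt ((xr - x) * (x - xl)) /
        (2 * π * y1 * x * (1 - x)))) = h ^ 2 / (y2 * (y1 + y2)) := by
  intro h xl xr α
  have hy12 : 0 < y1 + y2 := by linarith
  have hh2 : h ^ 2 = y1 + y2 - y1 * y2 := Real.sq_sqrt (by linarith)
  have hh0 : 0 < h := Real.sqrt_pos.mpr (by linarith)
  have hhy2 : h < y2 := by nlinarith [hh2, sq_nonneg (h - y2)]
  have hxlxr : xl < xr := by
    have e : xr - xl = 4 * y2 * h * y1 / (y1 + y2) ^ 2 := by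
      show y2 * (h + y1) ^ 2 / (y1 + y2) ^ 2 - y2 * (h - y1) ^ 2 / (y1 + y2) ^ 2 = _
      field_simp; ring
    have hlt : 0 < 4 * y2 * h * y1 / (y1 + y2) ^ 2 := by positivity
    linarith [e, hlt]
  have hxr1 : xr < 1 := by
    have e : 1 - xr = y1 * (y2 - h) ^ 2 / (y1 + y2) ^ 2 := by
      show 1 - y2 * (h + y1) ^ 2 / (y1 + y2) ^ 2 = _
      field_simp
      linear_combination (-(y1 + y2)) * hh2
    have hlt : 0 < y1 * (y2 - h) ^ 2 / (y1 + y2) ^ 2 := by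
      have : (0:ℝ) < (y2 - h) ^ 2 := pow_pos (sub_pos.mpr hhy2) 2
      positivity
    linarith [e, hlt]
  have hxl0 : 0 ≤ xl := by positivity
  -- rewrite integrand
  have hcongr : ∀ x ∈ Set.uIcc xl xr,
      x * ((α + 1) * Real.sqrt ((xr - x) * (x - xl)) / (2 * π * y1 * x * (1 - x)))
      = ((α + 1) / (2 * π * y1)) * (Real.sqrt ((xr - x) * (x - xl)) / (1 - x)) := by
    intro x hx
    rw [Set.uIcc_of_le hxlxr.le] at hx
    by_cases hx0 : x = 0
    · have hxl : xl = 0 := le_antisymm (by simpa [hx0] using hx.1) hxl0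
      rw [hx0, hxl]
      simp
    · rw [cancel_aux _ _ _ _ hx0]
      ring
  rw [intervalIntegral.integral_congr hcongr, intervalIntegral.integral_const_mul,
    key_integral xl xr 1 hxlxr hxr1]
  -- compute sqrt((1-xl)(1-xr))
  have e1 : 1 - xl = y1 * (y2 + h) ^ 2 / (y1 + y2) ^ 2 := by
    show 1 - y2 * (h - y1) ^ 2 / (y1 + y2) ^ 2 = _
    field_simp
    linear_combination (-(y1 + y2)) * hh2
  have e2 : 1 - xr = y1 * (y2 - h) ^ 2 / (y1 + y2) ^ 2 := by
    show 1 - y2 * (h + y1) ^ 2 / (y1 + y2) ^ 2 = _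
    field_simp
    linear_combination (-(y1 + y2)) * hh2
  have hD : Real.sqrt ((1 - xl) * (1 - xr)) = y1 * (y2 - 1) / (y1 + y2) := by
    rw [e1, e2]
    have hy2h : (y2 + h) * (y2 - h) = (y2 - 1) * (y1 + y2) := by
      linear_combination -hh2
    have e3 : y1 * (y2 + h) ^ 2 / (y1 + y2) ^ 2 * (y1 * (y2 - h) ^ 2 / (y1 + y2) ^ 2)
        = (y1 * ((y2 + h) * (y2 - h)) / (y1 + y2) ^ 2) ^ 2 := by
      ring
    rw [e3, hy2h]
    rw [show y1 * ((y2 - 1) * (y1 + y2)) / (y1 + y2) ^ 2 = y1 * (y2 - 1) / (y1 + y2) by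
      field_simp]
    exact Real.sqrt_sq (div_nonneg (mul_nonneg hy1.le (by linarith)) hy12.le)
  rw [hD]
  -- final algebra
  have hsum : xl + xr = 2 * y2 * (h ^ 2 + y1 ^ 2) / (y1 + y2) ^ 2 := by
    show y2 * (h - y1) ^ 2 / (y1 + y2) ^ 2 + y2 * (h + y1) ^ 2 / (y1 + y2) ^ 2 = _
    field_simp
    ring
  rw [hsum, hh2]
  show (y1 / y2 + 1) / (2 * π * y1) * _ = _
  have hπ : π ≠ 0 := Real.pi_ne_zero
  field_simp
  ring
end

section
/- Let $y_1, y_2 > 0$ with $y_2 < 1$, and set $h = \sqrt{y_1 + y_2 - y_1 y_2}$, $x_l = \frac{y_2 (h - y_1)^2}{(y_1+y_2)^2}$, $x_r = \frac{y_2 (h + y_1)^2}{(y_1+y_2)^2}$, $\alpha = y_1/y_2$. Then $\int_{x_l}^{x_r} x \cdot \frac{(\alpha+1)\sqrt{(x_r - x)(x - x_l)}}{2\pi y_1 x (1-x)} \, dx = \frac{y_2}{y_1+y_2}$. -/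
open Real

set_option maxHeartbeats 1000000 in
lemma key_int (a b : ℝ) (hab : a < b) (hb1 : b < 1) :
    (∫ x in a..b, Real.sqrt ((b - x) * (x - a)) / (1 - x)) =
      π * (1 - (a + b) / 2 - Real.sqrt ((1 - a) * (1 - b))) := by
  set m : ℝ := (a + b) / 2 with hm
  set r : ℝ := (b - a) / 2 with hrdef
  have hr : 0 < r := by rw [hrdef]; linarith
  set d : ℝ := 1 - m with hd
  have hdr : r < d := by rw [hd, hm, hrdef]; linarith
  set k : ℝ := Real.sqrt ((1 - a) * (1 - b)) with hk
  have hk2 : k ^ 2 = d ^ 2 - r ^ 2 := by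
    rw [hk, sq_sqrt (by nlinarith)]
    rw [hd, hm, hrdef]; ring
  have hkpos : 0 < k := Real.sqrt_pos.2 (by nlinarith)
  set F : ℝ → ℝ := fun x => d * Real.arcsin ((x - m) / r)
      - Real.sqrt ((b - x) * (x - a))
      + k * Real.arcsin ((r ^ 2 - d * (x - m)) / (r * (1 - x))) with hF
  have hderiv : ∀ x ∈ Set.Ioo a b,
      HasDerivAt F (Real.sqrt ((b - x) * (x - a)) / (1 - x)) x := by
    intro x hx
    obtain ⟨hxa, hxb⟩ := hx
    have h1x : 0 < 1 - x := by linarith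
    have hP : 0 < (b - x) * (x - a) := mul_pos (by linarith) (by linarith)
    set S : ℝ := Real.sqrt ((b - x) * (x - a)) with hS
    have hSpos : 0 < S := Real.sqrt_pos.2 hP
    have hS2 : S ^ 2 = (b - x) * (x - a) := sq_sqrt hP.le
    -- first arcsin argument
    have hw1lt : ((x - m) / r) ^ 2 < 1 := by
      rw [div_pow, div_lt_one (by positivity)]
      nlinarith
    have hw1ne1 : (x - m) / r ≠ 1 := by nlinarith [sq_nonneg ((x-m)/r - 1)]
    have hw1nem1 : (x - m) / r ≠ -1 := by nlinarith [sq_nonneg ((x-m)/r + 1)]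
    have hsqrt1 : Real.sqrt (1 - ((x - m) / r) ^ 2) = S / r := by
      have e1 : 1 - ((x - m) / r) ^ 2 = ((b - x) * (x - a)) / r ^ 2 := by
        field_simp; ring
      rw [e1, Real.sqrt_div hP.le, Real.sqrt_sq hr.le, hS]
    -- second arcsin argument
    have hden2 : r * (1 - x) ≠ 0 := by positivity
    set w2 : ℝ := (r ^ 2 - d * (x - m)) / (r * (1 - x)) with hw2
    have e2 : 1 - w2 ^ 2 = (d ^ 2 - r ^ 2) * ((b - x) * (x - a)) / (r * (1 - x)) ^ 2 := by
      rw [hw2]; field_simp; ring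
    have hpos2 : 0 < 1 - w2 ^ 2 := by
      rw [e2]; exact div_pos (mul_pos (by nlinarith) hP) (by positivity)
    have hw2ne1 : w2 ≠ 1 := fun h => by rw [h] at hpos2; norm_num at hpos2
    have hw2nem1 : w2 ≠ -1 := fun h => by rw [h] at hpos2; norm_num at hpos2
    have hsqrt2 : Real.sqrt (1 - w2 ^ 2) = k * S / (r * (1 - x)) := by
      rw [e2, ← hk2, Real.sqrt_div (by positivity), Real.sqrt_mul (by positivity),
        Real.sqrt_sq hkpos.le, Real.sqrt_sq (by positivity), hS]
    -- derivatives of inner functions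
    have hinner1 : HasDerivAt (fun y : ℝ => (y - m) / r) (1 / r) x := by
      simpa using ((hasDerivAt_id x).sub_const m).div_const r
    have harc1 : HasDerivAt (fun y : ℝ => Real.arcsin ((y - m) / r))
        (1 / Real.sqrt (1 - ((x - m) / r) ^ 2) * (1 / r)) x :=
      by have := (Real.hasDerivAt_arcsin hw1nem1 hw1ne1).comp x hinner1; exact this
    have hp : HasDerivAt (fun y : ℝ => (b - y) * (y - a)) (a + b - 2 * x) x := by
      have h1 : HasDerivAt (fun y : ℝ => b - y) (-1) x := by
        simpa using (hasDerivAt_id x).const_sub b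
      have h2 : HasDerivAt (fun y : ℝ => y - a) 1 x := by
        simpa using (hasDerivAt_id x).sub_const a
      have := h1.mul h2
      exact this.congr_deriv (by ring)
    have hsq : HasDerivAt (fun y : ℝ => Real.sqrt ((b - y) * (y - a)))
        ((a + b - 2 * x) / (2 * S)) x := by
      simpa [hS] using hp.sqrt hP.ne'
    have hinner2 : HasDerivAt (fun y : ℝ => (r ^ 2 - d * (y - m)) / (r * (1 - y)))
        ((r ^ 2 - d ^ 2) / (r * (1 - x) ^ 2)) x := by
      have hnum : HasDerivAt (fun y : ℝ => r ^ 2 - d * (y - m)) (-d) x := by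
        simpa using (((hasDerivAt_id x).sub_const m).const_mul d).const_sub (r ^ 2)
      have hden : HasDerivAt (fun y : ℝ => r * (1 - y)) (-r) x := by
        simpa using (((hasDerivAt_id x).const_sub 1).const_mul r)
      have := hnum.div hden hden2
      refine this.congr_deriv ?_
      rw [hd]; field_simp; ring
    have harc2 : HasDerivAt (fun y : ℝ => Real.arcsin ((r ^ 2 - d * (y - m)) / (r * (1 - y))))
        (1 / Real.sqrt (1 - w2 ^ 2) * ((r ^ 2 - d ^ 2) / (r * (1 - x) ^ 2))) x :=
      by have := (Real.hasDerivAt_arcsin hw2nem1 hw2ne1).comp x hinner2; exact this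
    have hFd : HasDerivAt F
        (d * (1 / Real.sqrt (1 - ((x - m) / r) ^ 2) * (1 / r))
          - (a + b - 2 * x) / (2 * S)
          + k * (1 / Real.sqrt (1 - w2 ^ 2) * ((r ^ 2 - d ^ 2) / (r * (1 - x) ^ 2)))) x :=
      ((harc1.const_mul d).sub hsq).add (harc2.const_mul k)
    convert hFd using 1
    rw [hsqrt1, hsqrt2]
    have hSne : S ≠ 0 := ne_of_gt hSpos
    have h1xne : (1:ℝ) - x ≠ 0 := ne_of_gt h1x
    have hkne : k ≠ 0 := ne_of_gt hkpos
    have hrne : r ≠ 0 := ne_of_gt hr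
    have t1 : d * (1 / (S / r) * (1 / r)) = d / S := by
      rw [one_div_div]; field_simp
    have t2 : k * (1 / (k * S / (r * (1 - x))) * ((r ^ 2 - d ^ 2) / (r * (1 - x) ^ 2)))
        = (r ^ 2 - d ^ 2) / ((1 - x) * S) := by
      rw [one_div_div]; field_simp
    rw [t1, t2]
    simp only [hd, hm, hrdef]
    field_simp
    linear_combination 4 * hS2
  have hbne : b - a ≠ 0 := ne_of_gt (by linarith)
  have hcont : ContinuousOn F (Set.Icc a b) := by
    apply ContinuousOn.add
    · apply ContinuousOn.sub
      · exact (Real.continuous_arcsin.comp (by continuity)).continuousOn.const_smul d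
      · exact ((continuous_const.sub continuous_id).mul
          (continuous_id.sub continuous_const)).sqrt.continuousOn
    · apply ContinuousOn.const_smul _ k
      apply Real.continuous_arcsin.comp_continuousOn
      apply ContinuousOn.div
      · fun_prop
      · fun_prop
      · intro x hx
        have : x ≤ b := hx.2
        have : 0 < 1 - x := by linarith
        positivity
  have hint : IntervalIntegrable (fun x => Real.sqrt ((b - x) * (x - a)) / (1 - x))
      MeasureTheory.volume a b := by
    apply ContinuousOn.intervalIntegrable
    apply ContinuousOn.div
    · fun_prop
    · fun_prop
    · intro x hx
      rw [Set.uIcc_of_le hab.le] at hx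
      have : x ≤ b := hx.2
      have : 0 < 1 - x := by linarith
      positivity
  rw [intervalIntegral.integral_eq_sub_of_hasDeriv_right_of_le hab.le hcont
    (fun x hx => (hderiv x hx).hasDerivWithinAt) hint]
  have e1b : (b - m) / r = 1 := by rw [hm, hrdef]; field_simp; ring
  have e1a : (a - m) / r = -1 := by rw [hm, hrdef]; field_simp; ring
  have e2b : (r ^ 2 - d * (b - m)) / (r * (1 - b)) = -1 := by
    rw [hd, hm, hrdef]; rw [div_eq_iff (ne_of_gt (by nlinarith))]; ring
  have e2a : (r ^ 2 - d * (a - m)) / (r * (1 - a)) = 1 := by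
    rw [hd, hm, hrdef]; rw [div_eq_iff (ne_of_gt (by nlinarith))]; ring
  have hFb : F b = d * (π / 2) + k * (-(π / 2)) := by
    rw [hF]; simp only [e1b, e2b, Real.arcsin_one, Real.arcsin_neg_one]
    simp
  have hFa : F a = d * (-(π / 2)) + k * (π / 2) := by
    rw [hF]; simp only [e1a, e2a, Real.arcsin_one, Real.arcsin_neg_one]
    simp
  rw [hFb, hFa, hd, hm]
  ring

theorem stmt_1 (y1 y2 : ℝ) (hy1 : 0 < y1) (hy2 : 0 < y2) (hy2' : y2 < 1) :
    let h := Real.sqrt (y1 + y2 - y1 * y2)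
    let xl := y2 * (h - y1) ^ 2 / (y1 + y2) ^ 2
    let xr := y2 * (h + y1) ^ 2 / (y1 + y2) ^ 2
    let α := y1 / y2
    (∫ x in xl..xr, x * ((α + 1) * Real.sqrt ((xr - x) * (x - xl)) /
        (2 * π * y1 * x * (1 - x)))) = y2 / (y1 + y2) := by
  intro h xl xr α
  have hxl : xl = y2 * (h - y1) ^ 2 / (y1 + y2) ^ 2 := rfl
  have hxr : xr = y2 * (h + y1) ^ 2 / (y1 + y2) ^ 2 := rfl
  have hα : α = y1 / y2 := rfl
  have hs : 0 < y1 + y2 - y1 * y2 := by nlinarith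
  have hsq : h ^ 2 = y1 + y2 - y1 * y2 := Real.sq_sqrt hs.le
  have hhpos : 0 < h := Real.sqrt_pos.2 hs
  have hyy : 0 < y1 + y2 := by linarith
  have hab : xl < xr := by
    have hdiff : xr - xl = 4 * y2 * y1 * h / (y1 + y2) ^ 2 := by
      rw [hxl, hxr]; field_simp; ring
    nlinarith [div_pos (by positivity : (0:ℝ) < 4 * y2 * y1 * h) (by positivity : (0:ℝ) < (y1 + y2) ^ 2)]
  have hhy2 : y2 < h := by nlinarith [hsq, hhpos]
  have h1xr : 1 - xr = y1 * (h - y2) ^ 2 / (y1 + y2) ^ 2 := by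
    rw [hxr]; field_simp; linear_combination (-(y1+y2)) * hsq
  have hxr1 : xr < 1 := by
    have : 0 < 1 - xr := by
      rw [h1xr]
      exact div_pos (mul_pos hy1 (pow_pos (sub_pos.2 hhy2) 2)) (by positivity)
    linarith
  have hπ : π ≠ 0 := Real.pi_ne_zero
  have hcong : ∀ x : ℝ, x ≠ 0 →
      x * ((α + 1) * Real.sqrt ((xr - x) * (x - xl)) / (2 * π * y1 * x * (1 - x)))
        = (α + 1) / (2 * π * y1) * (Real.sqrt ((xr - x) * (x - xl)) / (1 - x)) := by
    intro x hx
    by_cases hx1 : (1 : ℝ) - x = 0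
    · rw [hx1]; simp
    · field_simp
  have h0 : ∀ᵐ x : ℝ, x ≠ 0 := by
    rw [MeasureTheory.ae_iff]
    have : {x : ℝ | ¬x ≠ 0} = {0} := by ext x; simp
    rw [this]
    exact MeasureTheory.measure_singleton 0
  rw [intervalIntegral.integral_congr_ae (h0.mono fun x hx _ => hcong x hx),
    intervalIntegral.integral_const_mul, key_int xl xr hab hxr1]
  have hsqrtval : Real.sqrt ((1 - xl) * (1 - xr)) = y1 * (1 - y2) / (y1 + y2) := by
    have e : (1 - xl) * (1 - xr) = (y1 * (1 - y2) / (y1 + y2)) ^ 2 := by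
      rw [hxl, hxr]; field_simp
      linear_combination (y2^2*(h^2 + (y1+y2-y1*y2)) - 2*y2*((y1+y2)^2 - y2*y1^2) - 4*y1^2*y2^2) * hsq
    rw [e, Real.sqrt_sq (div_nonneg (by nlinarith) hyy.le)]
  have hsum : xl + xr = 2 * y2 * (y1 + y2 - y1 * y2 + y1 ^ 2) / (y1 + y2) ^ 2 := by
    rw [hxl, hxr]; field_simp; linear_combination 2 * hsq
  rw [hα, hsqrtval, hsum]
  field_simp
  ring
end

section
/- Let $y_1 > 1$, $y_2 > 0$, $h = \sqrt{y_1+y_2-y_1y_2}$ real positive, $x_l, x_r = \frac{y_2(h\mp y_1)^2}{(y_1+y_2)^2}$, $\alpha = y_1/y_2$. Then $\int_{x_l}^{x_r} (1-x)\frac{(\alpha+1)\sqrt{(x_r-x)(x-x_l)}}{2\pi y_1 x(1-x)}\,dx = \frac{h^2}{y_1(y_1+y_2)}$. -/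
open Real

lemma integral_sqrt_div_x {a b : ℝ} (ha : 0 < a) (hab : a < b) :
    ∫ x in a..b, Real.sqrt ((b - x) * (x - a)) / x
      = π * ((a + b) / 2 - Real.sqrt (a * b)) := by
  have hba : 0 < b - a := sub_pos.mpr hab
  have hb : 0 < b := ha.trans hab
  set s := Real.sqrt (a * b) with hs
  set F : ℝ → ℝ := fun x => Real.sqrt ((b - x) * (x - a))
      + (a + b) / 2 * Real.arcsin ((2 * x - a - b) / (b - a))
      - s * Real.arcsin (((a + b) * x - 2 * a * b) / ((b - a) * x)) with hF
  have hcont : ContinuousOn F (Set.Icc a b) := by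
    apply ContinuousOn.sub
    · apply ContinuousOn.add
      · exact (Real.continuous_sqrt.comp (by continuity)).continuousOn
      · exact (continuous_const.mul (Real.continuous_arcsin.comp (by continuity))).continuousOn
    · apply ContinuousOn.mul continuousOn_const
      apply Real.continuous_arcsin.comp_continuousOn
      apply ContinuousOn.div (by fun_prop) (by fun_prop)
      intro x hx
      have : 0 < x := lt_of_lt_of_le ha hx.1
      positivity
  have hderiv : ∀ x ∈ Set.Ioo a b,
      HasDerivAt F (Real.sqrt ((b - x) * (x - a)) / x) x := by
    intro x hx
    obtain ⟨hax, hxb⟩ := hx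
    have hx0 : 0 < x := ha.trans hax
    have hP : 0 < (b - x) * (x - a) := mul_pos (by linarith) (by linarith)
    set S := Real.sqrt ((b - x) * (x - a)) with hSdef
    have hS : 0 < S := Real.sqrt_pos.mpr hP
    have hS2 : S ^ 2 = (b - x) * (x - a) := Real.sq_sqrt hP.le
    have hsab : s ^ 2 = a * b := Real.sq_sqrt (by positivity)
    have hspos : 0 < s := Real.sqrt_pos.mpr (by positivity)
    -- piece 1
    have d1 : HasDerivAt (fun y => Real.sqrt ((b - y) * (y - a)))
        ((a + b - 2 * x) / (2 * S)) x := by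
      have hP' : HasDerivAt (fun y => (b - y) * (y - a)) (a + b - 2 * x) x := by
        have := ((hasDerivAt_id x).const_sub b).mul ((hasDerivAt_id x).sub_const a)
        refine this.congr_deriv ?_
        simp; ring
      have := (Real.hasDerivAt_sqrt hP.ne').comp x hP'
      refine this.congr_deriv ?_
      rw [← hSdef]; ring
    -- piece 2
    have hu1 : -1 < (2 * x - a - b) / (b - a) := by
      rw [lt_div_iff₀ hba]; linarith
    have hu2 : (2 * x - a - b) / (b - a) < 1 := by
      rw [div_lt_one hba]; linarith
    have d2 : HasDerivAt (fun y => Real.arcsin ((2 * y - a - b) / (b - a)))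
        (1 / Real.sqrt (1 - ((2 * x - a - b) / (b - a)) ^ 2) * (2 / (b - a))) x := by
      have hin : HasDerivAt (fun y => (2 * y - a - b) / (b - a)) (2 / (b - a)) x := by
        have := ((((hasDerivAt_id x).const_mul 2).sub_const a).sub_const b).div_const (b - a)
        simpa using this
      exact (Real.hasDerivAt_arcsin hu1.ne' hu2.ne).comp x hin
    -- piece 3
    have hden0 : (b - a) * x ≠ 0 := (mul_pos hba hx0).ne'
    have hv1 : -1 < ((a + b) * x - 2 * a * b) / ((b - a) * x) := by
      rw [lt_div_iff₀ (mul_pos hba hx0)]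
      nlinarith [mul_pos hb (sub_pos.mpr hax)]
    have hv2 : ((a + b) * x - 2 * a * b) / ((b - a) * x) < 1 := by
      rw [div_lt_one (mul_pos hba hx0)]
      nlinarith [mul_pos ha (sub_pos.mpr hxb)]
    have dv : HasDerivAt (fun y => ((a + b) * y - 2 * a * b) / ((b - a) * y))
        (2 * a * b / ((b - a) * x ^ 2)) x := by
      have hnum : HasDerivAt (fun y => (a + b) * y - 2 * a * b) (a + b) x := by
        simpa using ((hasDerivAt_id x).const_mul (a + b)).sub_const (2 * a * b)
      have hden : HasDerivAt (fun y => (b - a) * y) (b - a) x := by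
        simpa using (hasDerivAt_id x).const_mul (b - a)
      have := hnum.div hden hden0
      refine this.congr_deriv ?_
      field_simp
      ring
    have d3 : HasDerivAt (fun y => Real.arcsin (((a + b) * y - 2 * a * b) / ((b - a) * y)))
        (1 / Real.sqrt (1 - (((a + b) * x - 2 * a * b) / ((b - a) * x)) ^ 2)
          * (2 * a * b / ((b - a) * x ^ 2))) x :=
      by exact (Real.hasDerivAt_arcsin hv1.ne' hv2.ne).comp x dv
    have dF := (d1.add (d2.const_mul ((a + b) / 2))).sub (d3.const_mul s)
    have hq1 : Real.sqrt (1 - ((2 * x - a - b) / (b - a)) ^ 2) = 2 * S / (b - a) := by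
      have e : 1 - ((2 * x - a - b) / (b - a)) ^ 2 = (2 * S / (b - a)) ^ 2 := by
        rw [div_pow, div_pow, mul_pow, hS2]
        field_simp
        ring
      rw [e, Real.sqrt_sq (by positivity)]
    have hq2 : Real.sqrt (1 - (((a + b) * x - 2 * a * b) / ((b - a) * x)) ^ 2)
        = 2 * s * S / ((b - a) * x) := by
      have e : 1 - (((a + b) * x - 2 * a * b) / ((b - a) * x)) ^ 2
          = (2 * s * S / ((b - a) * x)) ^ 2 := by
        rw [div_pow, div_pow, mul_pow, mul_pow, mul_pow, hS2, hsab]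
        field_simp
        ring
      rw [e, Real.sqrt_sq (by positivity)]
    refine dF.congr_deriv ?_
    rw [hq1, hq2]
    rw [show S / x = ((b - x) * (x - a)) / (x * S) by
      rw [← hS2]; field_simp]
    field_simp
    ring
  have hint : IntervalIntegrable (fun x => Real.sqrt ((b - x) * (x - a)) / x)
      MeasureTheory.volume a b := by
    apply ContinuousOn.intervalIntegrable
    apply ContinuousOn.div
    · exact (Real.continuous_sqrt.comp (by continuity)).continuousOn
    · fun_prop
    · intro x hx
      rw [Set.uIcc_of_le hab.le] at hx
      exact (lt_of_lt_of_le ha hx.1).ne'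
  have key := intervalIntegral.integral_eq_sub_of_hasDeriv_right_of_le hab.le hcont
    (fun x hx => (hderiv x hx).hasDerivWithinAt) hint
  rw [key]
  have e1 : (2 * b - a - b) / (b - a) = 1 := by
    rw [show 2 * b - a - b = b - a by ring, div_self hba.ne']
  have e2 : ((a + b) * b - 2 * a * b) / ((b - a) * b) = 1 := by
    rw [show (a + b) * b - 2 * a * b = (b - a) * b by ring, div_self (mul_pos hba hb).ne']
  have e3 : (2 * a - a - b) / (b - a) = -1 := by
    rw [show 2 * a - a - b = -(b - a) by ring, neg_div, div_self hba.ne']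
  have e4 : ((a + b) * a - 2 * a * b) / ((b - a) * a) = -1 := by
    rw [show (a + b) * a - 2 * a * b = -((b - a) * a) by ring, neg_div,
      div_self (mul_pos hba ha).ne']
  simp only [hF, e1, e2, e3, e4, Real.arcsin_one, Real.arcsin_neg_one, sub_self, mul_zero,
    zero_mul, Real.sqrt_zero]
  ring

lemma stmt_4_aux (y1 y2 h xl xr α : ℝ) (hy1 : 1 < y1) (hy2 : 0 < y2)
    (hpos : y1 * y2 < y1 + y2)
    (hh : h = Real.sqrt (y1 + y2 - y1 * y2))
    (hl : xl = y2 * (h - y1) ^ 2 / (y1 + y2) ^ 2)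
    (hr : xr = y2 * (h + y1) ^ 2 / (y1 + y2) ^ 2)
    (hα : α = y1 / y2) :
    (∫ x in xl..xr, (1 - x) * ((α + 1) * Real.sqrt ((xr - x) * (x - xl)) /
        (2 * π * y1 * x * (1 - x)))) = h ^ 2 / (y1 * (y1 + y2)) := by
  have hq : 0 < y1 + y2 - y1 * y2 := by linarith
  have hy12 : 0 < y1 + y2 := by linarith
  have hy10 : 0 < y1 := by linarith
  have hhpos : 0 < h := hh ▸ Real.sqrt_pos.mpr hq
  have hsq : h ^ 2 = y1 + y2 - y1 * y2 := hh ▸ Real.sq_sqrt hq.le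
  have hhy1 : h < y1 := by nlinarith
  have hxl : 0 < xl := by
    rw [hl]
    have : h - y1 ≠ 0 := by intro hc; nlinarith
    positivity
  have hxlr : xl < xr := by
    rw [hl, hr]
    have hnum : y2 * (h - y1) ^ 2 < y2 * (h + y1) ^ 2 := by nlinarith [mul_pos (mul_pos hy2 hhpos) hy10]
    have hd : (0:ℝ) < (y1 + y2) ^ 2 := by positivity
    exact div_lt_div_of_pos_right hnum hd
  have hcongr : (∫ x in xl..xr, (1 - x) * ((α + 1) * Real.sqrt ((xr - x) * (x - xl)) /
        (2 * π * y1 * x * (1 - x))))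
      = ∫ x in xl..xr, (α + 1) / (2 * π * y1) * (Real.sqrt ((xr - x) * (x - xl)) / x) := by
    apply intervalIntegral.integral_congr_ae
    have h1 : ∀ᵐ x : ℝ, x ≠ (1 : ℝ) := by
      refine MeasureTheory.ae_iff.mpr ?_
      simpa using Real.volume_singleton
    filter_upwards [h1] with x hx1 hxmem
    rw [Set.uIoc_of_le hxlr.le] at hxmem
    have hx0 : x ≠ 0 := (hxl.trans hxmem.1).ne'
    have h1x : (1 : ℝ) - x ≠ 0 := sub_ne_zero.mpr (Ne.symm hx1)
    have hπ : (π : ℝ) ≠ 0 := Real.pi_ne_zero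
    field_simp
  rw [hcongr, intervalIntegral.integral_const_mul, integral_sqrt_div_x hxl hxlr]
  have hsrt : Real.sqrt (xl * xr) = y2 * (y1 ^ 2 - h ^ 2) / (y1 + y2) ^ 2 := by
    rw [show xl * xr = (y2 * (y1 ^ 2 - h ^ 2) / (y1 + y2) ^ 2) ^ 2 by rw [hl, hr]; ring]
    apply Real.sqrt_sq
    have : 0 < y1 ^ 2 - h ^ 2 := by nlinarith
    positivity
  rw [hsrt, hl, hr, hα]
  have hπ : (π : ℝ) ≠ 0 := Real.pi_ne_zero
  field_simp
  ring

theorem stmt_4 (y1 y2 : ℝ) (hy1 : 1 < y1) (hy2 : 0 < y2)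
    (hpos : y1 * y2 < y1 + y2) :
    let h := Real.sqrt (y1 + y2 - y1 * y2)
    let xl := y2 * (h - y1) ^ 2 / (y1 + y2) ^ 2
    let xr := y2 * (h + y1) ^ 2 / (y1 + y2) ^ 2
    let α := y1 / y2
    (∫ x in xl..xr, (1 - x) * ((α + 1) * Real.sqrt ((xr - x) * (x - xl)) /
        (2 * π * y1 * x * (1 - x)))) = h ^ 2 / (y1 * (y1 + y2)) := by
  intro h xl xr α
  exact stmt_4_aux y1 y2 h xl xr α hy1 hy2 hpos rfl rfl rfl rfl
end

section
/- Let $y_1 \in (0,1)$, $y_2 > 0$, $h = \sqrt{y_1+y_2-y_1y_2}$, $x_l, x_r = \frac{y_2(h\mp y_1)^2}{(y_1+y_2)^2}$, $\alpha = y_1/y_2$. Then $\int_{x_l}^{x_r} (1-x)\frac{(\alpha+1)\sqrt{(x_r-x)(x-x_l)}}{2\pi y_1 x(1-x)}\,dx = \frac{y_1}{y_1+y_2}$. -/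
open Real

lemma key (a b : ℝ) (ha : 0 < a) (hab : a < b) :
    ∫ x in a..b, Real.sqrt ((b - x) * (x - a)) / x
      = π * ((a + b) / 2 - Real.sqrt (a * b)) := by
  have hb : 0 < b := ha.trans hab
  set c : ℝ := (a + b) / 2 with hc
  set r : ℝ := (b - a) / 2 with hr
  have hr0 : 0 < r := by rw [hr]; linarith
  set s : ℝ := Real.sqrt (a * b) with hs
  have hs0 : 0 < s := Real.sqrt_pos.2 (by positivity)
  have hs2 : s ^ 2 = a * b := Real.sq_sqrt (by positivity)
  set F : ℝ → ℝ := fun x =>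
    Real.sqrt ((b - x) * (x - a)) + c * Real.arcsin ((x - c) / r)
      - s * Real.arcsin (c / r - a * b / (r * x)) with hF
  have hFcont : ContinuousOn F (Set.Icc a b) := by
    apply ContinuousOn.sub
    · apply ContinuousOn.add
      · exact ((continuous_const.sub continuous_id).mul
          (continuous_id.sub continuous_const)).sqrt.continuousOn
      · exact (continuous_const.mul (Real.continuous_arcsin.comp
          ((continuous_id.sub continuous_const).div_const r))).continuousOn
    · apply ContinuousOn.mul continuousOn_const
      apply Real.continuous_arcsin.comp_continuousOn
      apply ContinuousOn.sub continuousOn_const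
      apply ContinuousOn.div continuousOn_const (by fun_prop)
      intro x hx
      have : 0 < x := lt_of_lt_of_le ha hx.1
      positivity
  have hderiv : ∀ x ∈ Set.Ioo a b,
      HasDerivAt F (Real.sqrt ((b - x) * (x - a)) / x) x := by
    intro x hx
    have hxa : a < x := hx.1
    have hxb : x < b := hx.2
    have hx0 : 0 < x := ha.trans hxa
    have hp : 0 < (b - x) * (x - a) := by nlinarith
    set S : ℝ := Real.sqrt ((b - x) * (x - a)) with hS
    have hS0 : 0 < S := Real.sqrt_pos.2 hp
    have hS2 : S ^ 2 = (b - x) * (x - a) := Real.sq_sqrt hp.le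
    -- first term
    have hpd : HasDerivAt (fun x : ℝ => (b - x) * (x - a)) (a + b - 2 * x) x := by
      have := ((hasDerivAt_id x).const_sub b).mul ((hasDerivAt_id x).sub_const a)
      refine this.congr_deriv ?_
      simp only [id_eq]; ring
    have h1 : HasDerivAt (fun x => Real.sqrt ((b - x) * (x - a)))
        ((a + b - 2 * x) / (2 * S)) x := hpd.sqrt hp.ne'
    -- second term
    have harg : |(x - c) / r| < 1 := by
      rw [abs_div, abs_of_pos hr0, div_lt_one hr0, abs_lt]
      constructor <;> linarith
    have h2i : HasDerivAt (fun x : ℝ => (x - c) / r) (1 / r) x := by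
      simpa using ((hasDerivAt_id x).sub_const c).div_const r
    have h2 : HasDerivAt (fun x => Real.arcsin ((x - c) / r))
        (1 / Real.sqrt (1 - ((x - c) / r) ^ 2) * (1 / r)) x :=
      (Real.hasDerivAt_arcsin (by intro h; rw [h] at harg; simp at harg)
        (by intro h; rw [h] at harg; simp at harg)).comp x h2i
    -- third term
    have hgi : HasDerivAt (fun x : ℝ => c / r - a * b / (r * x))
        (a * b / (r * x ^ 2)) x := by
      have hfd : HasDerivAt (fun x : ℝ => c / r - a * b / r * x⁻¹)
          (-(a * b / r * (-(x ^ 2)⁻¹))) x :=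
        ((hasDerivAt_inv hx0.ne').const_mul (a * b / r)).const_sub (c / r)
      have hfeq : (fun x : ℝ => c / r - a * b / (r * x))
          = (fun x : ℝ => c / r - a * b / r * x⁻¹) := by
        funext y
        rcases eq_or_ne y 0 with hy | hy
        · simp [hy]
        · field_simp
      rw [hfeq]
      convert hfd using 1
      field_simp
    have hg1 : 1 - (c / r - a * b / (r * x)) ^ 2
        = a * b * ((b - x) * (x - a)) / (r * x) ^ 2 := by
      rw [hc, hr]
      have h1' : x ≠ 0 := hx0.ne'
      have h2' : b - a ≠ 0 := by linarith
      field_simp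
      ring
    have hg1pos : 0 < 1 - (c / r - a * b / (r * x)) ^ 2 := by
      rw [hg1]
      exact div_pos (mul_pos (by positivity) hp) (by positivity)
    have hgabs : |c / r - a * b / (r * x)| < 1 := by
      exact (sq_lt_one_iff_abs_lt_one _).mp (by linarith)
    have h3 : HasDerivAt (fun x => Real.arcsin (c / r - a * b / (r * x)))
        (1 / Real.sqrt (1 - (c / r - a * b / (r * x)) ^ 2) * (a * b / (r * x ^ 2))) x :=
      (Real.hasDerivAt_arcsin (by intro h; rw [h] at hgabs; simp at hgabs)
        (by intro h; rw [h] at hgabs; simp at hgabs)).comp x hgi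
    have hD : HasDerivAt F
        ((a + b - 2 * x) / (2 * S)
          + c * (1 / Real.sqrt (1 - ((x - c) / r) ^ 2) * (1 / r))
          - s * (1 / Real.sqrt (1 - (c / r - a * b / (r * x)) ^ 2) * (a * b / (r * x ^ 2)))) x :=
      (h1.add (h2.const_mul c)).sub (h3.const_mul s)
    convert hD using 1
    have e1 : Real.sqrt (1 - ((x - c) / r) ^ 2) = S / r := by
      have he : 1 - ((x - c) / r) ^ 2 = ((b - x) * (x - a)) / r ^ 2 := by
        rw [hc, hr]
        have h2' : b - a ≠ 0 := by linarith
        field_simp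
        ring
      rw [he, Real.sqrt_div hp.le, Real.sqrt_sq hr0.le]
    have e2 : Real.sqrt (1 - (c / r - a * b / (r * x)) ^ 2) = s * S / (r * x) := by
      rw [hg1, Real.sqrt_div (by positivity), Real.sqrt_sq (by positivity),
        Real.sqrt_mul (by positivity)]
    rw [e1, e2]
    have t2 : 1 / (S / r) * (1 / r) = 1 / S := by
      field_simp
    have t3 : 1 / (s * S / (r * x)) * (a * b / (r * x ^ 2)) = a * b / (s * S * x) := by
      field_simp
    rw [t2, t3]
    have hsne := hs0.ne'
    have hSne := hS0.ne'
    have hxne := hx0.ne'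
    field_simp
    linear_combination 2 * hS2
  have hint : IntervalIntegrable (fun x => Real.sqrt ((b - x) * (x - a)) / x)
      MeasureTheory.volume a b := by
    apply ContinuousOn.intervalIntegrable
    apply ContinuousOn.div
    · exact (by fun_prop : Continuous fun x : ℝ => Real.sqrt ((b - x) * (x - a))).continuousOn
    · fun_prop
    · intro x hx
      rw [Set.uIcc_of_le hab.le] at hx
      exact (lt_of_lt_of_le ha hx.1).ne'
  rw [intervalIntegral.integral_eq_sub_of_hasDerivAt_of_le hab.le hFcont hderiv hint]
  have hca : (a - c) / r = -1 := by
    rw [div_eq_iff hr0.ne']; linarith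
  have hcb : (b - c) / r = 1 := by
    rw [div_eq_iff hr0.ne']; linarith
  have hga : c / r - a * b / (r * a) = -1 := by
    rw [hc, hr]
    have h2' : b - a ≠ 0 := by linarith
    field_simp
    ring
  have hgb : c / r - a * b / (r * b) = 1 := by
    rw [hc, hr]
    have h2' : b - a ≠ 0 := by linarith
    field_simp
    ring
  simp only [hF, hca, hcb, hga, hgb, sub_self, mul_zero, zero_mul, mul_self_sub_mul_self,
    Real.sqrt_zero, Real.arcsin_one, Real.arcsin_neg_one]
  ring


theorem stmt_5 (y1 y2 : ℝ) (hy1 : y1 ∈ Set.Ioo (0:ℝ) 1) (hy2 : 0 < y2) :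
    let h := Real.sqrt (y1 + y2 - y1 * y2)
    let xl := y2 * (h - y1) ^ 2 / (y1 + y2) ^ 2
    let xr := y2 * (h + y1) ^ 2 / (y1 + y2) ^ 2
    let α := y1 / y2
    (∫ x in xl..xr, (1 - x) * ((α + 1) * Real.sqrt ((xr - x) * (x - xl)) /
        (2 * π * y1 * x * (1 - x)))) = y1 / (y1 + y2) := by
  intro h xl xr α
  obtain ⟨hy1a, hy1b⟩ := hy1
  have hh : h = Real.sqrt (y1 + y2 - y1 * y2) := rfl
  have hxl : xl = y2 * (h - y1) ^ 2 / (y1 + y2) ^ 2 := rfl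
  have hxr : xr = y2 * (h + y1) ^ 2 / (y1 + y2) ^ 2 := rfl
  have hα : α = y1 / y2 := rfl
  have hsum : 0 < y1 + y2 := by linarith
  have hpos : 0 < y1 + y2 - y1 * y2 := by nlinarith
  have hh2 : h ^ 2 = y1 + y2 - y1 * y2 := by rw [hh]; exact Real.sq_sqrt hpos.le
  have hh0 : 0 < h := by rw [hh]; exact Real.sqrt_pos.2 hpos
  have hhy1 : y1 < h := by nlinarith
  have hxl0 : 0 < xl := by
    rw [hxl]
    have : 0 < h - y1 := by linarith
    positivity
  have hlr : xl < xr := by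
    rw [hxl, hxr, div_lt_div_iff₀ (by positivity) (by positivity)]
    nlinarith [mul_pos (mul_pos (mul_pos hy2 hh0) hy1a) (pow_pos hsum 2)]
  have step1 : (∫ x in xl..xr, (1 - x) * ((α + 1) * Real.sqrt ((xr - x) * (x - xl)) /
        (2 * π * y1 * x * (1 - x))))
      = ∫ x in xl..xr, ((α + 1) / (2 * π * y1)) * (Real.sqrt ((xr - x) * (x - xl)) / x) := by
    apply intervalIntegral.integral_congr_ae
    have h1 : ∀ᵐ (x : ℝ), x ≠ (1 : ℝ) := by
      rw [MeasureTheory.ae_iff]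
      simp only [not_not, Set.setOf_eq_eq_singleton]
      exact Real.volume_singleton
    filter_upwards [h1] with x hx1 hxmem
    rw [Set.uIoc_of_le hlr.le] at hxmem
    have hx0 : x ≠ 0 := (hxl0.trans hxmem.1).ne'
    have hx1' : (1 : ℝ) - x ≠ 0 := sub_ne_zero.mpr (Ne.symm hx1)
    have hπ : π ≠ 0 := Real.pi_ne_zero
    field_simp
  rw [step1, intervalIntegral.integral_const_mul, key xl xr hxl0 hlr]
  have hsq : Real.sqrt (xl * xr) = y2 * (h ^ 2 - y1 ^ 2) / (y1 + y2) ^ 2 := by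
    have e : xl * xr = (y2 * (h ^ 2 - y1 ^ 2) / (y1 + y2) ^ 2) ^ 2 := by
      rw [hxl, hxr]; field_simp; ring
    rw [e, Real.sqrt_sq]
    have : 0 < h ^ 2 - y1 ^ 2 := by nlinarith
    positivity
  rw [hsq, hα]
  have hsum2 : (xl + xr) / 2 - y2 * (h ^ 2 - y1 ^ 2) / (y1 + y2) ^ 2
      = 2 * y1 ^ 2 * y2 / (y1 + y2) ^ 2 := by
    rw [hxl, hxr]; field_simp; ring
  rw [hsum2]
  have hπ : π ≠ 0 := Real.pi_ne_zero
  field_simp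
end

section
/- Let $y_1, y_2 > 0$ with $y_2 > 1$, $h = \sqrt{y_1+y_2-y_1y_2} > 0$, so that $y_2 > h$. Then for the contour integral over the unit circle, $\frac{y_2 h^2 i}{4\pi(y_1+y_2)}\oint_{|\xi|=1}\frac{(\xi^2-1)^2}{\xi^3 |y_2 - h\xi|^2}\,d\xi = \frac{h^2}{y_2(y_1+y_2)}$, where on $|\xi|=1$ we interpret $|y_2-h\xi|^2 = (y_2-h\xi)(y_2 - h/\xi)$. -/
open Real Complex Metric Set

private lemma circleInt_add {f g : ℂ → ℂ} {c : ℂ} {R : ℝ} (hf : CircleIntegrable f c R)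
    (hg : CircleIntegrable g c R) :
    (∮ z in C(c, R), (f z + g z)) = (∮ z in C(c, R), f z) + ∮ z in C(c, R), g z := by
  simp only [circleIntegral, smul_add, intervalIntegral.integral_add hf.out hg.out]

private lemma decomp (H Y ξ : ℂ) (hH : H ≠ 0) (hY : Y ≠ 0) (hξ : ξ ≠ 0)
    (h1 : Y - H * ξ ≠ 0) (h2 : Y * ξ - H ≠ 0) (h3 : H * ξ - Y ≠ 0) :
    (ξ ^ 2 - 1) ^ 2 / (ξ ^ 3 * ((Y - H * ξ) * (Y - H / ξ))) =
      -1 / (H * Y) + ((-(H ^ 2 + Y ^ 2) / (H ^ 2 * Y ^ 2)) * (ξ - 0)⁻¹ +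
        ((-1 / (H * Y)) * (ξ - 0) ^ (-2 : ℤ) +
          (((Y ^ 2 - H ^ 2) / (H ^ 2 * Y ^ 2)) * (ξ - H / Y)⁻¹ +
            (-((Y ^ 2 - H ^ 2) / (H ^ 2 * Y ^ 2))) * (ξ - Y / H)⁻¹))) := by
  have e0 : ξ ^ 3 * ((Y - H * ξ) * (Y - H / ξ)) = ξ ^ 2 * ((Y - H * ξ) * (Y * ξ - H)) := by
    field_simp
  have e2 : (ξ - H / Y)⁻¹ = Y / (Y * ξ - H) := by
    rw [show ξ - H / Y = (Y * ξ - H) / Y by field_simp, inv_div]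
  have e3 : (ξ - Y / H)⁻¹ = H / (H * ξ - Y) := by
    rw [show ξ - Y / H = (H * ξ - Y) / H by field_simp, inv_div]
  have ei : (ξ - 0 : ℂ) ^ (-2 : ℤ) = 1 / ξ ^ 2 := by
    rw [sub_zero, zpow_neg, one_div]
    norm_cast
  have hd1 : H * Y ≠ 0 := mul_ne_zero hH hY
  have hd2 : H ^ 2 * Y ^ 2 * ξ ≠ 0 :=
    mul_ne_zero (mul_ne_zero (pow_ne_zero 2 hH) (pow_ne_zero 2 hY)) hξ
  have hd3 : H * Y * ξ ^ 2 ≠ 0 := mul_ne_zero hd1 (pow_ne_zero 2 hξ)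
  have hd4 : H ^ 2 * Y ^ 2 * (Y * ξ - H) ≠ 0 :=
    mul_ne_zero (mul_ne_zero (pow_ne_zero 2 hH) (pow_ne_zero 2 hY)) h2
  have hd5 : H ^ 2 * Y ^ 2 * (H * ξ - Y) ≠ 0 :=
    mul_ne_zero (mul_ne_zero (pow_ne_zero 2 hH) (pow_ne_zero 2 hY)) h3
  have hL : ξ ^ 2 * ((Y - H * ξ) * (Y * ξ - H)) ≠ 0 :=
    mul_ne_zero (pow_ne_zero 2 hξ) (mul_ne_zero h1 h2)
  rw [e0, e2, e3, ei, sub_zero, ← div_eq_mul_inv, div_div]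
  rw [div_mul_div_comm, div_mul_div_comm, ← neg_div, div_mul_div_comm]
  rw [div_add_div _ _ hd4 hd5,
    div_add_div _ _ hd3 (mul_ne_zero hd4 hd5),
    div_add_div _ _ hd2 (mul_ne_zero hd3 (mul_ne_zero hd4 hd5)),
    div_add_div _ _ hd1 (mul_ne_zero hd2 (mul_ne_zero hd3 (mul_ne_zero hd4 hd5))),
    div_eq_div_iff hL
      (mul_ne_zero hd1 (mul_ne_zero hd2 (mul_ne_zero hd3 (mul_ne_zero hd4 hd5))))]
  ring

theorem stmt_6 (y1 y2 : ℝ) (hy1 : 0 < y1) (hy2 : 0 < y2) (hy2' : 1 < y2)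
    (hpos : 0 < y1 + y2 - y1 * y2) :
    let h := Real.sqrt (y1 + y2 - y1 * y2)
    ((y2 : ℂ) * (h : ℂ) ^ 2 * Complex.I / (4 * (π : ℂ) * ((y1 : ℂ) + y2))) *
      (∮ ξ in C(0, 1), (ξ ^ 2 - 1) ^ 2 /
        (ξ ^ 3 * (((y2 : ℂ) - (h : ℂ) * ξ) * ((y2 : ℂ) - (h : ℂ) / ξ)))) =
    (h : ℂ) ^ 2 / ((y2 : ℂ) * ((y1 : ℂ) + y2)) := by
  intro h
  have hh : 0 < h := Real.sqrt_pos.mpr hpos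
  have hhy : h < y2 := by
    rw [Real.sqrt_lt' hy2]
    nlinarith
  set H : ℂ := (h : ℂ) with hH
  set Y : ℂ := (y2 : ℂ) with hY
  have hHne : H ≠ 0 := by simp [hH, Complex.ofReal_ne_zero, hh.ne']
  have hYne : Y ≠ 0 := by simp [hY, Complex.ofReal_ne_zero, hy2.ne']
  have habsH : ‖H‖ = h := by rw [hH, Complex.norm_real, Real.norm_eq_abs, abs_of_pos hh]
  have habsY : ‖Y‖ = y2 := by rw [hY, Complex.norm_real, Real.norm_eq_abs, abs_of_pos hy2]
  have habs_a : ‖(H / Y)‖ < 1 := by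
    rw [norm_div, habsH, habsY, div_lt_one hy2]; exact hhy
  have habs_b : 1 < ‖(Y / H)‖ := by
    rw [norm_div, habsH, habsY, lt_div_iff₀ hh]; linarith
  -- pointwise decomposition on the unit circle
  have key : EqOn (fun ξ : ℂ => (ξ ^ 2 - 1) ^ 2 / (ξ ^ 3 * ((Y - H * ξ) * (Y - H / ξ))))
      (fun ξ : ℂ => -1 / (H * Y) + ((-(H ^ 2 + Y ^ 2) / (H ^ 2 * Y ^ 2)) * (ξ - 0)⁻¹ +
        ((-1 / (H * Y)) * (ξ - 0) ^ (-2 : ℤ) +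
          (((Y ^ 2 - H ^ 2) / (H ^ 2 * Y ^ 2)) * (ξ - H / Y)⁻¹ +
            (-((Y ^ 2 - H ^ 2) / (H ^ 2 * Y ^ 2))) * (ξ - Y / H)⁻¹)))) (sphere (0:ℂ) 1) := by
    intro ξ hξ
    have hξ1 : ‖ξ‖ = 1 := by simpa [Complex.dist_eq] using hξ
    have hξ0 : ξ ≠ 0 := by
      intro h0; rw [h0] at hξ1; simp at hξ1
    have h1 : Y - H * ξ ≠ 0 := by
      intro h0
      have := sub_eq_zero.mp h0
      have : ‖Y‖ = ‖(H * ξ)‖ := by rw [this]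
      rw [habsY, norm_mul, habsH, hξ1, mul_one] at this
      linarith
    have h2 : Y * ξ - H ≠ 0 := by
      intro h0
      have := sub_eq_zero.mp h0
      have : ‖(Y * ξ)‖ = ‖H‖ := by rw [this]
      rw [habsH, norm_mul, habsY, hξ1, mul_one] at this
      linarith
    have h3 : H * ξ - Y ≠ 0 := by
      intro h0
      have := sub_eq_zero.mp h0
      have : ‖(H * ξ)‖ = ‖Y‖ := by rw [this]
      rw [habsY, norm_mul, habsH, hξ1, mul_one] at this
      linarith
    exact decomp H Y ξ hHne hYne hξ0 h1 h2 h3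
  rw [circleIntegral.integral_congr zero_le_one key]
  -- integrability of the pieces
  have hsub : ∀ w : ℂ, ‖w‖ ≠ 1 → ∀ ξ ∈ sphere (0:ℂ) 1, ξ - w ≠ 0 := by
    intro w hw ξ hξ h0
    have hξ1 : ‖ξ‖ = 1 := by simpa [Complex.dist_eq] using hξ
    rw [sub_eq_zero] at h0
    rw [h0] at hξ1
    exact hw hξ1
  have hiA : CircleIntegrable (fun _ : ℂ => -1 / (H * Y)) 0 1 := circleIntegrable_const _ _ _
  have hiB : CircleIntegrable
      (fun ξ : ℂ => (-(H ^ 2 + Y ^ 2) / (H ^ 2 * Y ^ 2)) * (ξ - 0)⁻¹) 0 1 := by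
    refine ContinuousOn.circleIntegrable zero_le_one ?_
    exact continuousOn_const.mul (((continuousOn_id).sub continuousOn_const).inv₀
      (hsub 0 (by simp)))
  have hiC : CircleIntegrable
      (fun ξ : ℂ => (-1 / (H * Y)) * (ξ - 0) ^ (-2 : ℤ)) 0 1 := by
    refine ContinuousOn.circleIntegrable zero_le_one ?_
    exact continuousOn_const.mul (((continuousOn_id).sub continuousOn_const).zpow₀ _
      (fun ξ hξ => Or.inl (hsub 0 (by simp) ξ hξ)))
  have hiD : CircleIntegrable
      (fun ξ : ℂ => ((Y ^ 2 - H ^ 2) / (H ^ 2 * Y ^ 2)) * (ξ - H / Y)⁻¹) 0 1 := by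
    refine ContinuousOn.circleIntegrable zero_le_one ?_
    exact continuousOn_const.mul (((continuousOn_id).sub continuousOn_const).inv₀
      (hsub (H / Y) habs_a.ne))
  have hiE : CircleIntegrable
      (fun ξ : ℂ => (-((Y ^ 2 - H ^ 2) / (H ^ 2 * Y ^ 2))) * (ξ - Y / H)⁻¹) 0 1 := by
    refine ContinuousOn.circleIntegrable zero_le_one ?_
    exact continuousOn_const.mul (((continuousOn_id).sub continuousOn_const).inv₀
      (hsub (Y / H) habs_b.ne'))
  have hi45 : CircleIntegrable (fun ξ : ℂ =>
      ((Y ^ 2 - H ^ 2) / (H ^ 2 * Y ^ 2)) * (ξ - H / Y)⁻¹ +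
        (-((Y ^ 2 - H ^ 2) / (H ^ 2 * Y ^ 2))) * (ξ - Y / H)⁻¹) 0 1 := hiD.add hiE
  have hi345 : CircleIntegrable (fun ξ : ℂ =>
      (-1 / (H * Y)) * (ξ - 0) ^ (-2 : ℤ) +
        (((Y ^ 2 - H ^ 2) / (H ^ 2 * Y ^ 2)) * (ξ - H / Y)⁻¹ +
          (-((Y ^ 2 - H ^ 2) / (H ^ 2 * Y ^ 2))) * (ξ - Y / H)⁻¹)) 0 1 := hiC.add hi45
  have hi2345 : CircleIntegrable (fun ξ : ℂ =>
      (-(H ^ 2 + Y ^ 2) / (H ^ 2 * Y ^ 2)) * (ξ - 0)⁻¹ +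
        ((-1 / (H * Y)) * (ξ - 0) ^ (-2 : ℤ) +
          (((Y ^ 2 - H ^ 2) / (H ^ 2 * Y ^ 2)) * (ξ - H / Y)⁻¹ +
            (-((Y ^ 2 - H ^ 2) / (H ^ 2 * Y ^ 2))) * (ξ - Y / H)⁻¹))) 0 1 := hiB.add hi345
  rw [circleInt_add hiA hi2345, circleInt_add hiB hi345, circleInt_add hiC hi45,
    circleInt_add hiD hiE]
  -- evaluate the five integrals
  have v1 : (∮ _ξ in C((0:ℂ), 1), (-1 / (H * Y) : ℂ)) = 0 := by
    have e : EqOn (fun _ : ℂ => -1 / (H * Y)) (fun ξ : ℂ => (-1 / (H * Y)) * (ξ - 0) ^ (0 : ℤ))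
        (sphere (0:ℂ) 1) := by
      intro ξ _; simp
    rw [circleIntegral.integral_congr zero_le_one e, circleIntegral.integral_const_mul,
      circleIntegral.integral_sub_zpow_of_ne (by norm_num) 0 0 1, mul_zero]
  have v2 : (∮ ξ in C((0:ℂ), 1), (-(H ^ 2 + Y ^ 2) / (H ^ 2 * Y ^ 2)) * (ξ - 0)⁻¹)
      = (-(H ^ 2 + Y ^ 2) / (H ^ 2 * Y ^ 2)) * (2 * π * I) := by
    rw [circleIntegral.integral_const_mul,
      circleIntegral.integral_sub_inv_of_mem_ball (mem_ball_self one_pos)]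
  have v3 : (∮ ξ in C((0:ℂ), 1), (-1 / (H * Y)) * (ξ - 0) ^ (-2 : ℤ)) = 0 := by
    rw [circleIntegral.integral_const_mul,
      circleIntegral.integral_sub_zpow_of_ne (by norm_num) 0 0 1, mul_zero]
  have v4 : (∮ ξ in C((0:ℂ), 1), ((Y ^ 2 - H ^ 2) / (H ^ 2 * Y ^ 2)) * (ξ - H / Y)⁻¹)
      = ((Y ^ 2 - H ^ 2) / (H ^ 2 * Y ^ 2)) * (2 * π * I) := by
    rw [circleIntegral.integral_const_mul,
      circleIntegral.integral_sub_inv_of_mem_ball (by simpa [Complex.dist_eq] using habs_a)]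
  have v5 : (∮ ξ in C((0:ℂ), 1), (-((Y ^ 2 - H ^ 2) / (H ^ 2 * Y ^ 2))) * (ξ - Y / H)⁻¹)
      = 0 := by
    rw [circleIntegral.integral_const_mul]
    have hbne : ∀ ξ ∈ closedBall (0:ℂ) 1, ξ - Y / H ≠ 0 := by
      intro ξ hξ h0
      have hξ1 : ‖ξ‖ ≤ 1 := by simpa [Complex.dist_eq] using hξ
      rw [sub_eq_zero] at h0
      rw [h0] at hξ1
      linarith
    have : (∮ ξ in C((0:ℂ), 1), (ξ - Y / H)⁻¹) = 0 := by
      refine Complex.circleIntegral_eq_zero_of_differentiable_on_off_countable zero_le_one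
        countable_empty (((continuousOn_id).sub continuousOn_const).inv₀ hbne) ?_
      intro z hz
      exact (differentiableAt_id.sub_const _).inv
        (hbne z (ball_subset_closedBall hz.1))
    rw [this, mul_zero]
  rw [v1, v2, v3, v4, v5]
  have hπ : (π : ℂ) ≠ 0 := Complex.ofReal_ne_zero.mpr Real.pi_ne_zero
  have hsum : (y1 : ℂ) + Y ≠ 0 := by
    rw [hY, ← Complex.ofReal_add]
    exact Complex.ofReal_ne_zero.mpr (by positivity)
  have hI2 : (Complex.I) * Complex.I = -1 := Complex.I_mul_I
  field_simp
  linear_combination (-4 * (π:ℂ) * H ^ 2) * hI2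
end

section
/- Let $y_1, y_2 > 0$, $y_1, y_2 \neq 1$, $h = \sqrt{y_1+y_2-y_1y_2} > 0$, $x_l, x_r = \frac{y_2(h\mp y_1)^2}{(y_1+y_2)^2}$, $\alpha = y_1/y_2$, and let $\ell_1$ denote $\int_{x_l}^{x_r} x\, f(x)\,dx$ and $\ell_2$ denote $\int_{x_l}^{x_r}(1-x) f(x)\,dx$ where $f(x) = \frac{(\alpha+1)\sqrt{(x_r-x)(x-x_l)}}{2\pi y_1 x(1-x)}$. Then $\ell_1 = \frac{h^2 \mathbf{1}\{y_2>1\} + y_2^2 \mathbf{1}\{y_2<1\}}{y_2(y_1+y_2)}$ and $\ell_2 = \frac{h^2 \mathbf{1}\{y_1>1\} + y_1^2 \mathbf{1}\{y_1<1\}}{y_1(y_1+y_2)}$. -/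
open Real
open Set

lemma semicircle_int (r k : ℝ) (hr : 0 < r) (hk : r < k) :
    ∫ u in (-r)..r, Real.sqrt (r^2 - u^2) / (k - u)
      = π * (k - Real.sqrt (k^2 - r^2)) := by
  have hk0 : 0 < k := hr.trans hk
  have hB2 : 0 < k^2 - r^2 := by nlinarith
  set B := Real.sqrt (k^2 - r^2) with hBdef
  have hBpos : 0 < B := Real.sqrt_pos.mpr hB2
  have hBsq : B^2 = k^2 - r^2 := Real.sq_sqrt hB2.le
  set w : ℝ → ℝ := fun u => (r^2 - k*u)/(r*(k-u)) with hw
  set F : ℝ → ℝ := fun u =>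
    k * Real.arcsin (u/r) - Real.sqrt (r^2 - u^2) + B * Real.arcsin (w u) with hF
  have key : ∀ u ∈ Ioo (-r) r,
      HasDerivAt F (Real.sqrt (r^2 - u^2) / (k - u)) u := by
    intro u hu
    obtain ⟨hu1, hu2⟩ := hu
    have hku : 0 < k - u := by linarith
    have hA2 : 0 < r^2 - u^2 := by nlinarith
    set A := Real.sqrt (r^2 - u^2) with hAdef
    have hApos : 0 < A := Real.sqrt_pos.mpr hA2
    have hAsq : A^2 = r^2 - u^2 := Real.sq_sqrt hA2.le
    -- first arcsin term
    have hd1 : HasDerivAt (fun u : ℝ => Real.arcsin (u/r))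
        (1 / Real.sqrt (1 - (u/r)^2) * (1/r)) u := by
      have h1 : HasDerivAt (fun u : ℝ => u/r) (1/r) u := (hasDerivAt_id u).div_const r
      exact (Real.hasDerivAt_arcsin (by intro h; rw [div_eq_iff hr.ne'] at h; nlinarith)
        (by intro h; rw [div_eq_iff hr.ne'] at h; nlinarith)).comp u h1
    -- sqrt term
    have hd2 : HasDerivAt (fun u : ℝ => Real.sqrt (r^2 - u^2))
        (1 / (2 * A) * (-(2*u))) u := by
      have h1 : HasDerivAt (fun u : ℝ => r^2 - u^2) (-(2*u)) u := by
        have := ((hasDerivAt_pow 2 u).const_sub (r^2))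
        simpa using this
      exact (Real.hasDerivAt_sqrt hA2.ne').comp u h1
    -- w derivative
    have hwd : HasDerivAt w ((r^2 - k^2)/(r*(k-u)^2)) u := by
      have hnum : HasDerivAt (fun u : ℝ => r^2 - k*u) (-k) u := by
        simpa using ((hasDerivAt_id u).const_mul k).const_sub (r^2)
      have hden : HasDerivAt (fun u : ℝ => r*(k-u)) (-r) u := by
        have : HasDerivAt (fun u : ℝ => k - u) (-1) u := by
          simpa using (hasDerivAt_id u).const_sub k
        simpa using this.const_mul r
      have := hnum.div hden (by positivity)
      refine this.congr_deriv (Eq.symm ?_)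
      show (r^2 - k^2)/(r*(k-u)^2) = (-k * (r*(k-u)) - (r^2 - k*u) * (-r)) / (r*(k-u))^2
      rw [div_eq_div_iff (mul_ne_zero hr.ne' (pow_ne_zero 2 hku.ne'))
        (pow_ne_zero 2 (mul_ne_zero hr.ne' hku.ne'))]
      ring
    have hw2 : (w u)^2 < 1 := by
      have heq : 1 - (w u)^2 = (k^2-r^2)*(r^2-u^2)/(r*(k-u))^2 := by
        simp only [hw]; field_simp; ring
      have hpos' : 0 < (k^2-r^2)*(r^2-u^2)/(r*(k-u))^2 := by positivity
      linarith
    have hd3 : HasDerivAt (fun u : ℝ => Real.arcsin (w u))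
        (1 / Real.sqrt (1 - (w u)^2) * ((r^2 - k^2)/(r*(k-u)^2))) u := by
      exact (Real.hasDerivAt_arcsin (by nlinarith) (by nlinarith)).comp u hwd
    have htot := ((hd1.const_mul k).sub hd2).add (hd3.const_mul B)
    refine htot.congr_deriv (Eq.symm ?_)
    -- sqrt simplifications
    have hs1 : Real.sqrt (1 - (u/r)^2) = A / r := by
      rw [show 1 - (u/r)^2 = (r^2-u^2)/r^2 by field_simp,
        Real.sqrt_div hA2.le, Real.sqrt_sq hr.le]
    have hs2 : Real.sqrt (1 - (w u)^2) = B * A / (r*(k-u)) := by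
      have hne : (r*(k-u)) ≠ 0 := by positivity
      have key2 : (1 - (w u)^2) * (r*(k-u))^2 = (k^2-r^2)*(r^2-u^2) := by
        simp only [hw]; field_simp; ring
      have e2 : 1 - (w u)^2 = (B*A/(r*(k-u)))^2 := by
        have h' : (B*A/(r*(k-u)))^2 = (k^2-r^2)*(r^2-u^2)/(r*(k-u))^2 := by
          rw [div_pow, mul_pow, hAsq, hBsq]
        rw [h', eq_div_iff (pow_ne_zero 2 hne)]
        exact key2
      rw [e2, Real.sqrt_sq (by positivity)]
    rw [hs1, hs2]
    field_simp
    linear_combination hAsq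
  have hcont : ContinuousOn F (Icc (-r) r) := by
    have hwc : ContinuousOn w (Icc (-r) r) := by
      apply ContinuousOn.div (by fun_prop) (by fun_prop)
      intro x hx
      have hx2 : x ≤ r := hx.2
      have : 0 < k - x := by linarith
      positivity
    apply ContinuousOn.add
    · apply ContinuousOn.sub
      · exact (continuous_const.mul
          (Real.continuous_arcsin.comp (continuous_id.div_const r))).continuousOn
      · exact (Real.continuous_sqrt.comp
          (continuous_const.sub (continuous_pow 2))).continuousOn
    · exact continuousOn_const.mul (Real.continuous_arcsin.comp_continuousOn hwc)
  have hint : IntervalIntegrable (fun u => Real.sqrt (r^2 - u^2) / (k - u))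
      MeasureTheory.volume (-r) r := by
    apply ContinuousOn.intervalIntegrable
    rw [uIcc_of_le (by linarith)]
    apply ContinuousOn.div (by fun_prop) (by fun_prop)
    intro x hx
    have : x ≤ r := hx.2
    have : 0 < k - x := by linarith
    positivity
  have := intervalIntegral.integral_eq_sub_of_hasDeriv_right_of_le (by linarith)
    hcont (fun x hx => (key x hx).hasDerivWithinAt) hint
  rw [this]
  have hwr : w r = -1 := by
    simp only [hw]
    rw [div_eq_iff (mul_pos hr (by linarith : (0:ℝ) < k - r)).ne']
    ring
  have hwnr : w (-r) = 1 := by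
    simp only [hw]
    rw [div_eq_iff (mul_pos hr (by linarith : (0:ℝ) < k - -r)).ne']
    ring
  simp only [hF, hwr, hwnr, div_self hr.ne', Real.arcsin_one, Real.arcsin_neg,
    neg_div, Real.arcsin_one]
  rw [show r^2 - r^2 = 0 by ring, show r^2 - (-r)^2 = 0 by ring]
  simp [Real.sqrt_zero]
  ring

lemma flip_int (r m : ℝ) :
    (∫ u in (-r)..r, Real.sqrt (r ^ 2 - u ^ 2) / (m + u))
      = ∫ u in (-r)..r, Real.sqrt (r ^ 2 - u ^ 2) / (m - u) := by
  have hnb := intervalIntegral.integral_comp_neg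
    (fun v => Real.sqrt (r ^ 2 - v ^ 2) / (m - v)) (a := -r) (b := r)
  simp only [neg_neg, sub_neg_eq_add, neg_sq] at hnb
  rw [← hnb]

set_option maxHeartbeats 1000000 in
theorem stmt_17 (y1 y2 : ℝ) (hy1 : 0 < y1) (hy2 : 0 < y2)
    (hy1' : y1 ≠ 1) (hy2' : y2 ≠ 1) (hpos : 0 < y1 + y2 - y1 * y2) :
    let h := Real.sqrt (y1 + y2 - y1 * y2)
    let xl := y2 * (h - y1) ^ 2 / (y1 + y2) ^ 2
    let xr := y2 * (h + y1) ^ 2 / (y1 + y2) ^ 2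
    let α := y1 / y2
    let f := fun x : ℝ => (α + 1) * Real.sqrt ((xr - x) * (x - xl)) /
      (2 * π * y1 * x * (1 - x))
    (∫ x in xl..xr, x * f x) =
      ((if 1 < y2 then h ^ 2 else 0) + (if y2 < 1 then y2 ^ 2 else 0)) /
        (y2 * (y1 + y2)) ∧
    (∫ x in xl..xr, (1 - x) * f x) =
      ((if 1 < y1 then h ^ 2 else 0) + (if y1 < 1 then y1 ^ 2 else 0)) /
        (y1 * (y1 + y2)) := by
  intro h xl xr α f
  have hf : ∀ x : ℝ, f x = (α + 1) * Real.sqrt ((xr - x) * (x - xl)) /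
      (2 * π * y1 * x * (1 - x)) := fun _ => rfl
  have hxl0 : xl = y2 * (h - y1) ^ 2 / (y1 + y2) ^ 2 := rfl
  have hxr0 : xr = y2 * (h + y1) ^ 2 / (y1 + y2) ^ 2 := rfl
  have hα : α = y1 / y2 := rfl
  have hs : (0:ℝ) < y1 + y2 := by positivity
  have hh2 : h ^ 2 = y1 + y2 - y1 * y2 := Real.sq_sqrt hpos.le
  have hhpos : 0 < h := Real.sqrt_pos.mpr hpos
  have hhy1 : h ≠ y1 := by
    intro e
    have h0 : (1 - y1) * (y1 + y2) = 0 := by nlinarith [hh2]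
    rcases mul_eq_zero.mp h0 with h1 | h1
    · exact hy1' (by linarith)
    · linarith
  have hhy2 : h ≠ y2 := by
    intro e
    have h0 : (1 - y2) * (y1 + y2) = 0 := by nlinarith [hh2]
    rcases mul_eq_zero.mp h0 with h1 | h1
    · exact hy2' (by linarith)
    · linarith
  set r := 2 * y1 * y2 * h / (y1 + y2) ^ 2 with hrdef
  set m := y2 * (h ^ 2 + y1 ^ 2) / (y1 + y2) ^ 2 with hmdef
  have hrpos : 0 < r := by rw [hrdef]; positivity
  have hxlm : xl = m - r := by rw [hxl0, hmdef, hrdef]; ring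
  have hxrm : xr = m + r := by rw [hxr0, hmdef, hrdef]; ring
  have hxlpos : 0 < xl := by
    rw [hxl0]
    have : h - y1 ≠ 0 := sub_ne_zero.mpr hhy1
    positivity
  have hxr1 : xr < 1 := by
    have e : 1 - xr = y1 * (h - y2) ^ 2 / (y1 + y2) ^ 2 := by
      rw [hxr0]; field_simp; linear_combination (-(y1+y2)) * hh2
    have : h - y2 ≠ 0 := sub_ne_zero.mpr hhy2
    nlinarith [e, div_pos (by positivity : (0:ℝ) < y1 * (h - y2)^2)
      (by positivity : (0:ℝ) < (y1 + y2)^2)]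
  have hxlxr : xl < xr := by rw [hxlm, hxrm]; linarith
  have hk1 : r < 1 - m := by
    have := hxr1; rw [hxrm] at this; linarith
  have hk2 : r < m := by
    have := hxlpos; rw [hxlm] at this; linarith
  have hr2 : r ^ 2 = 4 * y1 ^ 2 * y2 ^ 2 * (y1 + y2 - y1 * y2) / (y1 + y2) ^ 4 := by
    rw [hrdef, div_pow, mul_pow, hh2]; ring
  have hpi : π ≠ 0 := Real.pi_ne_zero
  -- square-root simplifications
  have hsq1 : (1 - m) ^ 2 - r ^ 2 = (y1 * (1 - y2) / (y1 + y2)) ^ 2 := by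
    rw [hmdef, hr2, hh2]; field_simp; ring
  have hsq2 : m ^ 2 - r ^ 2 = (y2 * (1 - y1) / (y1 + y2)) ^ 2 := by
    rw [hmdef, hr2, hh2]; field_simp; ring
  have hsqrt1 : Real.sqrt ((1 - m) ^ 2 - r ^ 2) = y1 * |1 - y2| / (y1 + y2) := by
    rw [hsq1, Real.sqrt_sq_eq_abs, abs_div, abs_mul, abs_of_pos hy1, abs_of_pos hs]
  have hsqrt2 : Real.sqrt (m ^ 2 - r ^ 2) = y2 * |1 - y1| / (y1 + y2) := by
    rw [hsq2, Real.sqrt_sq_eq_abs, abs_div, abs_mul, abs_of_pos hy2, abs_of_pos hs]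
  constructor
  · -- first integral
    have e1 : (∫ x in xl..xr, x * f x)
        = ∫ x in xl..xr, ((y1 + y2) / y2 / (2 * π * y1)) *
            (Real.sqrt ((xr - x) * (x - xl)) / (1 - x)) := by
      apply intervalIntegral.integral_congr
      intro x hx
      rw [Set.uIcc_of_le hxlxr.le] at hx
      have hx0 : 0 < x := lt_of_lt_of_le hxlpos hx.1
      have hx1 : x < 1 := lt_of_le_of_lt hx.2 hxr1
      have h1x : (1:ℝ) - x ≠ 0 := by linarith
      simp only [hf, hα]
      field_simp
    rw [e1, intervalIntegral.integral_const_mul]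
    have e2 : (∫ x in xl..xr, Real.sqrt ((xr - x) * (x - xl)) / (1 - x))
        = π * ((1 - m) - Real.sqrt ((1 - m) ^ 2 - r ^ 2)) := by
      have step : (∫ x in xl..xr, Real.sqrt ((xr - x) * (x - xl)) / (1 - x))
          = ∫ x in xl..xr,
              (fun u => Real.sqrt (r ^ 2 - u ^ 2) / ((1 - m) - u)) (x - m) := by
        apply intervalIntegral.integral_congr
        intro x _
        simp only
        rw [show (xr - x) * (x - xl) = r ^ 2 - (x - m) ^ 2 by
              rw [hxlm, hxrm]; ring,
            show (1:ℝ) - x = (1 - m) - (x - m) by ring]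
      rw [step, intervalIntegral.integral_comp_sub_right
            (fun u => Real.sqrt (r ^ 2 - u ^ 2) / ((1 - m) - u)) m,
          show xl - m = -r by rw [hxlm]; ring,
          show xr - m = r by rw [hxrm]; ring]
      exact semicircle_int r (1 - m) hrpos hk1
    rw [e2, hsqrt1]
    rcases hy2'.lt_or_gt with h2 | h2
    · rw [if_neg (by linarith), if_pos h2, abs_of_pos (by linarith : (0:ℝ) < 1 - y2),
        hmdef, hh2]
      field_simp
      ring
    · rw [if_pos h2, if_neg (by linarith),
        show |1 - y2| = y2 - 1 by rw [abs_of_neg (by linarith)]; ring,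
        hmdef, hh2]
      field_simp
      ring
  · -- second integral
    have e1 : (∫ x in xl..xr, (1 - x) * f x)
        = ∫ x in xl..xr, ((y1 + y2) / y2 / (2 * π * y1)) *
            (Real.sqrt ((xr - x) * (x - xl)) / x) := by
      apply intervalIntegral.integral_congr
      intro x hx
      rw [Set.uIcc_of_le hxlxr.le] at hx
      have hx0 : 0 < x := lt_of_lt_of_le hxlpos hx.1
      have hx1 : x < 1 := lt_of_le_of_lt hx.2 hxr1
      have h1x : (1:ℝ) - x ≠ 0 := by linarith
      simp only [hf, hα]
      field_simp
    rw [e1, intervalIntegral.integral_const_mul]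
    have e2 : (∫ x in xl..xr, Real.sqrt ((xr - x) * (x - xl)) / x)
        = π * (m - Real.sqrt (m ^ 2 - r ^ 2)) := by
      have step : (∫ x in xl..xr, Real.sqrt ((xr - x) * (x - xl)) / x)
          = ∫ x in xl..xr,
              (fun u => Real.sqrt (r ^ 2 - u ^ 2) / (m + u)) (x - m) := by
        apply intervalIntegral.integral_congr
        intro x _
        simp only
        rw [show (xr - x) * (x - xl) = r ^ 2 - (x - m) ^ 2 by
              rw [hxlm, hxrm]; ring,
            show m + (x - m) = x by ring]
      rw [step, intervalIntegral.integral_comp_sub_right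
            (fun u => Real.sqrt (r ^ 2 - u ^ 2) / (m + u)) m,
          show xl - m = -r by rw [hxlm]; ring,
          show xr - m = r by rw [hxrm]; ring]
      rw [flip_int r m]
      exact semicircle_int r m hrpos hk2
    rw [e2, hsqrt2]
    rcases hy1'.lt_or_gt with h2 | h2
    · rw [if_neg (by linarith), if_pos h2, abs_of_pos (by linarith : (0:ℝ) < 1 - y1),
        hmdef, hh2]
      field_simp
      ring
    · rw [if_pos h2, if_neg (by linarith),
        show |1 - y1| = y1 - 1 by rw [abs_of_neg (by linarith)]; ring,
        hmdef, hh2]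
      field_simp
      ring
end

section
/- Let $h, y_2 > 0$ with $h \neq y_2$, and define $F(\xi) = \frac{\xi(\xi + \frac{1}{h})(\xi + \frac{h}{1})}{\xi + \frac{y_2}{h}}$ where $h^2 = y_1 + y_2 - y_1 y_2$ for some $y_1 > 0$. Then $\frac{1}{6} F'''\left(-\frac{h}{y_2}\right) = \frac{h\, y_1 y_2^5}{(1-y_2)^2 (y_1+y_2)^4} \cdot \frac{1}{1}$, i.e., the third derivative of $\xi \mapsto \frac{\xi(\xi+\frac{1}{h})(\xi+h)}{\xi+\frac{y_2}{h}}$ evaluated at $\xi = -h/y_2$, divided by 6, equals $\frac{h y_1 y_2^5}{(1-y_2)^2(y_1+y_2)^4}$. -/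
open Real

lemma aux_iter3 (c B C R p : ℝ) (hp : p + c ≠ 0) :
    iteratedDeriv 3 (fun x : ℝ => x ^ 2 + B * x + C + R * (x + c)⁻¹) p
      = -6 * R / (p + c) ^ 4 := by
  have hs : IsOpen {x : ℝ | x + c ≠ 0} :=
    isOpen_ne.preimage (by continuity)
  have hmem : {x : ℝ | x + c ≠ 0} ∈ nhds p := hs.mem_nhds hp
  have h1 : ∀ x : ℝ, x + c ≠ 0 →
      HasDerivAt (fun x : ℝ => x ^ 2 + B * x + C + R * (x + c)⁻¹)
        (2 * x + B - R / (x + c) ^ 2) x := by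
    intro x hx
    have hu : HasDerivAt (fun x : ℝ => x + c) 1 x := (hasDerivAt_id x).add_const c
    have hinv : HasDerivAt (fun x : ℝ => (x + c)⁻¹) (-1 / (x + c) ^ 2) x := hu.inv hx
    have := (((hasDerivAt_pow 2 x).add ((hasDerivAt_id x).const_mul B)).add_const C).add
      (hinv.const_mul R)
    refine this.congr_deriv ?_
    field_simp
    ring
  have h2 : ∀ x : ℝ, x + c ≠ 0 →
      HasDerivAt (fun x : ℝ => 2 * x + B - R / (x + c) ^ 2)
        (2 + 2 * R / (x + c) ^ 3) x := by
    intro x hx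
    have hu : HasDerivAt (fun x : ℝ => x + c) 1 x := (hasDerivAt_id x).add_const c
    have hpow : HasDerivAt (fun x : ℝ => (x + c) ^ 2) (2 * (x + c) ^ 1 * 1) x := hu.pow 2
    have hne : (x + c) ^ 2 ≠ 0 := pow_ne_zero _ hx
    have := ((((hasDerivAt_id x).const_mul 2).add_const B).sub
      ((hasDerivAt_const x R).div hpow hne))
    refine this.congr_deriv ?_
    field_simp
    ring
  have h3 : ∀ x : ℝ, x + c ≠ 0 →
      HasDerivAt (fun x : ℝ => 2 + 2 * R / (x + c) ^ 3)
        (-6 * R / (x + c) ^ 4) x := by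
    intro x hx
    have hu : HasDerivAt (fun x : ℝ => x + c) 1 x := (hasDerivAt_id x).add_const c
    have hpow : HasDerivAt (fun x : ℝ => (x + c) ^ 3) (3 * (x + c) ^ 2 * 1) x := hu.pow 3
    have hne : (x + c) ^ 3 ≠ 0 := pow_ne_zero _ hx
    have := (hasDerivAt_const x 2).add ((hasDerivAt_const x (2 * R)).div hpow hne)
    refine this.congr_deriv ?_
    field_simp
    ring
  have e1 : deriv (fun x : ℝ => x ^ 2 + B * x + C + R * (x + c)⁻¹)
      =ᶠ[nhds p] (fun x : ℝ => 2 * x + B - R / (x + c) ^ 2) := by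
    filter_upwards [hmem] with x hx using (h1 x hx).deriv
  have e2 : deriv (deriv (fun x : ℝ => x ^ 2 + B * x + C + R * (x + c)⁻¹))
      =ᶠ[nhds p] (fun x : ℝ => 2 + 2 * R / (x + c) ^ 3) := by
    refine e1.deriv.trans ?_
    filter_upwards [hmem] with x hx using (h2 x hx).deriv
  have : iteratedDeriv 3 (fun x : ℝ => x ^ 2 + B * x + C + R * (x + c)⁻¹) p
      = deriv (deriv (deriv (fun x : ℝ => x ^ 2 + B * x + C + R * (x + c)⁻¹))) p := by
    simp [iteratedDeriv_succ, iteratedDeriv_zero]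
  rw [this, e2.deriv_eq, (h3 p hp).deriv]

theorem stmt_18 (y1 y2 h : ℝ) (hy1 : 0 < y1) (hy2 : 0 < y2) (hy2' : y2 ≠ 1)
    (hh : 0 < h) (hh2 : h ^ 2 = y1 + y2 - y1 * y2) (hhy : h ≠ y2) :
    iteratedDeriv 3 (fun ξ : ℝ => ξ * (ξ + 1 / h) * (ξ + h) / (ξ + y2 / h))
        (-(h / y2)) / 6 =
      h * y1 * y2 ^ 5 / ((1 - y2) ^ 2 * (y1 + y2) ^ 4) := by
  have hh0 : h ≠ 0 := ne_of_gt hh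
  have hy20 : y2 ≠ 0 := ne_of_gt hy2
  set c : ℝ := y2 / h with hc
  set B : ℝ := h + 1 / h - c with hB
  set C : ℝ := 1 - B * c with hC
  set R : ℝ := -(C * c) with hR
  have hpc : -(h / y2) + c ≠ 0 := by
    intro heq
    apply hhy
    rw [hc] at heq
    have h2eq : h ^ 2 = y2 ^ 2 := by field_simp at heq; nlinarith [heq]
    nlinarith [h2eq, hh, hy2]
  have heq : (fun ξ : ℝ => ξ * (ξ + 1 / h) * (ξ + h) / (ξ + y2 / h))
      =ᶠ[nhds (-(h / y2))] (fun x : ℝ => x ^ 2 + B * x + C + R * (x + c)⁻¹) := by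
    have hs : IsOpen {x : ℝ | x + c ≠ 0} := isOpen_ne.preimage (by continuity)
    filter_upwards [hs.mem_nhds hpc] with x hx
    rw [hR, hC, hB, hc]
    rw [hc] at hx
    have hx' : x * h + y2 ≠ 0 := by
      intro k
      apply hx
      field_simp
      linear_combination k
    field_simp
    ring
  have e3 : iteratedDeriv 3 (fun ξ : ℝ => ξ * (ξ + 1 / h) * (ξ + h) / (ξ + y2 / h))
      (-(h / y2)) = -6 * R / (-(h / y2) + c) ^ 4 := by
    rw [show iteratedDeriv 3 (fun ξ : ℝ => ξ * (ξ + 1 / h) * (ξ + h) / (ξ + y2 / h))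
        (-(h / y2)) = iteratedDeriv 3 (fun x : ℝ => x ^ 2 + B * x + C + R * (x + c)⁻¹)
        (-(h / y2)) from heq.iteratedDeriv_eq 3]
    exact aux_iter3 c B C R _ hpc
  have hne1 : y2 - 1 ≠ 0 := sub_ne_zero.mpr hy2'
  have hne2 : y1 + y2 ≠ 0 := by positivity
  have hCval : C = y1 * (y2 - 1) ^ 2 / h ^ 2 := by
    rw [hC, hB, hc]
    field_simp
    linear_combination (1 - y2) * hh2
  have hRval : R = -(y1 * y2 * (y2 - 1) ^ 2) / h ^ 3 := by
    rw [hR, hCval, hc]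
    field_simp
  have hpcval : -(h / y2) + c = (y1 + y2) * (y2 - 1) / (h * y2) := by
    rw [hc]
    field_simp
    linear_combination -hh2
  rw [e3, hRval, hpcval, div_div]
  have h4 : ((y1 + y2) * (y2 - 1) / (h * y2)) ^ 4 ≠ 0 :=
    pow_ne_zero _ (div_ne_zero (mul_ne_zero hne2 hne1) (mul_ne_zero hh0 hy20))
  rw [div_eq_div_iff (mul_ne_zero h4 (by norm_num))
    (mul_ne_zero (pow_ne_zero _ (sub_ne_zero.mpr (Ne.symm hy2'))) (pow_ne_zero _ hne2))]
  field_simp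
  ring
end
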